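/- arXiv:1909.01676 — 3 statements merged into one kernel-verified Lean document; each statement's English description precedes it below -/
import Mathlib

section
/- Let a : ℕ → {0,1} be the Champernowne-type sequence obtained by concatenating all finite binary words ordered first by length and then lexicographically, and define the coloring φ : ℤ → {0,1} by φ(n) = 0 for n < 0 and φ(n) = a_n for n ≥ 0. Let P be the path graph on ℤ, in which m and n are adjacent if and only if |m − n| = 1. Then the colored graph (P,φ) is aperiodic: every graph automorphism f of P satisfying φ(f(n)) = φ(n) for all n ∈ ℤ is the identity. -/
/-- The j-th binary word (j ≥ 2): the binary representation of j with its leading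
digit 1 deleted; `false` stands for the digit 0 and `true` for the digit 1. -/
def champWord (j : ℕ) : List Bool := (Nat.bits j).reverse.tail

/-- The concatenation w₂ w₃ ⋯ w_{m+1} of the first m binary words. -/
def champPrefix (m : ℕ) : List Bool := (List.range m).flatMap (fun i => champWord (i + 2))

/-- The Champernowne-type sequence a : ℕ → {0,1}: the n-th letter of the infinite
concatenation w₂ w₃ w₄ ⋯. -/
def champ (n : ℕ) : Bool := (champPrefix (n + 1)).getD n false

/-- The coloring φ : ℤ → {0,1}: φ(n) = 0 for n < 0 and φ(n) = a_n for n ≥ 0. -/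
def champColoring (n : ℤ) : Bool := if n < 0 then false else champ n.toNat

/-- The path graph on ℤ: m and n are adjacent iff |m - n| = 1. -/
def intPathGraph : SimpleGraph ℤ := SimpleGraph.fromRel (fun m n => n = m + 1)

section champAux

lemma bits_two : Nat.bits 2 = [false, true] := by
  have := Nat.bits_append_bit 1 false (by simp); simpa [Nat.bit] using this

lemma bits_odd (n : ℕ) : Nat.bits (2*n+1) = true :: Nat.bits n := by
  have := Nat.bits_append_bit n true (fun _ => rfl)
  simpa [Nat.bit, Nat.mul_comm] using this

lemma champ_one : champ 1 = true := by
  have h3 : Nat.bits 3 = [true, true] := by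
    have := bits_odd 1; simpa [Nat.one_bits] using this
  simp [champ, champPrefix, champWord, List.range_succ, bits_two, h3]

lemma champWord_length (j : ℕ) (h : 2 ≤ j) : 1 ≤ (champWord j).length := by
  have hs : 1 < Nat.size j := Nat.lt_size.mpr (by simpa using h)
  have : (Nat.bits j).length = Nat.size j := Nat.size_eq_bits_len j
  simp only [champWord, List.length_tail, List.length_reverse, this]
  omega

lemma champPrefix_succ (m : ℕ) :
    champPrefix (m+1) = champPrefix m ++ champWord (m+2) := by
  simp [champPrefix, List.range_succ]

lemma champPrefix_length (m : ℕ) : m ≤ (champPrefix m).length := by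
  induction m with
  | zero => simp
  | succ m ih =>
    rw [champPrefix_succ, List.length_append]
    have := champWord_length (m+2) (by omega)
    omega

lemma champPrefix_prefix {m m' : ℕ} (h : m ≤ m') :
    champPrefix m <+: champPrefix m' := by
  induction m' with
  | zero => simp_all
  | succ k ih =>
    rcases Nat.lt_or_ge m (k+1) with h' | h'
    · exact (ih (by omega)).trans (by rw [champPrefix_succ]; exact List.prefix_append _ _)
    · have : m = k + 1 := by omega
      subst this; exact List.prefix_refl _

lemma champ_eq_getElem {n m : ℕ} (h : n < (champPrefix m).length) :
    champ n = (champPrefix m).getD n false := by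
  have hn : n < (champPrefix (n+1)).length :=
    lt_of_lt_of_le (Nat.lt_succ_self n) (champPrefix_length (n+1))
  rw [champ, List.getD_eq_getElem _ _ hn, List.getD_eq_getElem _ _ h]
  rcases Nat.le_total (n+1) m with hle | hle
  · exact ((champPrefix_prefix hle).getElem hn).symm.trans rfl |>.symm ▸
      ((champPrefix_prefix hle).getElem hn)
  · exact ((champPrefix_prefix hle).getElem h).symm

/-- The last letter of `champWord j` is `true` when `j` is odd and `≥ 3`. -/
lemma champWord_odd_getLast? (k : ℕ) (hk : 1 ≤ k) :
    (champWord (2*k+1)).getLast? = some true := by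
  have hb : Nat.bits (2*k+1) = true :: Nat.bits k := bits_odd k
  have hne : Nat.bits k ≠ [] := by
    intro h
    have h0 : Nat.size k = 0 := by rw [← Nat.size_eq_bits_len, h]; rfl
    have h1 : 0 < Nat.size k := Nat.lt_size.mpr (by simpa using hk)
    omega
  rw [champWord, hb]
  simp only [List.reverse_cons]
  rw [List.tail_append, if_neg (by simpa using (by simpa using hne : (Nat.bits k).reverse ≠ []))]
  simp

lemma champ_true_far (N : ℕ) : ∃ n, N ≤ n ∧ champ n = true := by
  set m := 2*N + 1 with hm
  set L := (champPrefix (m+1)).length with hL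
  have hL1 : m + 1 ≤ L := champPrefix_length (m+1)
  refine ⟨L - 1, by omega, ?_⟩
  have hlt : L - 1 < L := by omega
  rw [champ_eq_getElem hlt, List.getD_eq_getElem _ _ hlt]
  have hlast : (champPrefix (m+1)).getLast? = some true := by
    rw [champPrefix_succ]
    have hw : (champWord (m+2)).getLast? = some true := by
      have : m + 2 = 2*(N+1)+1 := by omega
      rw [this]; exact champWord_odd_getLast? (N+1) (by omega)
    rw [List.getLast?_append, hw]; rfl
  have hne : champPrefix (m+1) ≠ [] := by
    intro h
    have : L = 0 := by rw [hL, h]; rfl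
    omega
  rw [List.getLast?_eq_getLast hne] at hlast
  have := List.getLast_eq_getElem (l := champPrefix (m+1)) hne
  rw [this] at hlast
  simpa using hlast

end champAux

lemma champColoring_one : champColoring 1 = true := by
  simp [champColoring, champ_one]

lemma champColoring_neg {x : ℤ} (h : x < 0) : champColoring x = false := by
  simp [champColoring, h]

/-- The colored graph (P,φ), where P is the path graph on ℤ and φ is the
Champernowne-type coloring, is aperiodic: every graph automorphism f of P satisfying
φ(f(n)) = φ(n) for all n ∈ ℤ is the identity. -/
theorem stmt_13 (f : intPathGraph ≃g intPathGraph)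
    (hf : ∀ n : ℤ, champColoring (f n) = champColoring n) :
    ∀ n : ℤ, f n = n := by
  have adj : ∀ m n : ℤ, intPathGraph.Adj m n ↔ m ≠ n ∧ (n = m + 1 ∨ m = n + 1) := by
    intro m n; simp [intPathGraph, SimpleGraph.fromRel_adj]
  have finj : Function.Injective f := Equiv.injective f.toEquiv
  have step : ∀ n : ℤ, f (n+1) = f n + 1 ∨ f (n+1) = f n - 1 := by
    intro n
    have h1 : intPathGraph.Adj n (n+1) := (adj n (n+1)).mpr ⟨by omega, Or.inl rfl⟩
    have h2 : intPathGraph.Adj (f n) (f (n+1)) := f.map_rel_iff.mpr h1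
    rcases (adj _ _).mp h2 with ⟨hne, h | h⟩ <;> omega
  have nb : ∀ n : ℤ, f (n+1) - f n = f (n+2) - f (n+1) := by
    intro n
    have h1 := step n
    have h2 := step (n+1)
    have e : (n:ℤ)+1+1 = n+2 := by ring
    rw [e] at h2
    rcases h1 with h1 | h1 <;> rcases h2 with h2 | h2
    · omega
    · exfalso
      have hfe : f (n+2) = f n := by omega
      have := finj hfe; omega
    · exfalso
      have hfe : f (n+2) = f n := by omega
      have := finj hfe; omega
    · omega
  have sconst : ∀ n : ℤ, f (n+1) - f n = f 1 - f 0 := by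
    intro n
    induction n using Int.induction_on with
    | zero => norm_num
    | succ k ih =>
      have h := nb (k : ℤ)
      have e : ((k:ℤ))+2 = (k+1)+1 := by ring
      rw [e] at h
      omega
    | pred k ih =>
      have h := nb (-(k:ℤ)-1)
      have e1 : (-(k:ℤ)-1)+1 = -k := by ring
      have e2 : (-(k:ℤ)-1)+2 = -k+1 := by ring
      rw [e1, e2] at h
      rw [e1]
      omega
  have h10 := step 0
  norm_num at h10
  rcases h10 with hA | hB
  · -- f n = f 0 + n
    have formula : ∀ n : ℤ, f n = f 0 + n := by
      intro n
      induction n using Int.induction_on with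
      | zero => norm_num
      | succ k ih =>
        have := sconst (k : ℤ); omega
      | pred k ih =>
        have h := sconst (-(k:ℤ)-1)
        have e1 : (-(k:ℤ)-1)+1 = -k := by ring
        rw [e1] at h
        omega
    have hc : f 0 = 0 := by
      by_contra hc
      set c := f 0 with hcdef
      have hper : ∀ n : ℤ, champColoring (c + n) = champColoring n := by
        intro n
        have := hf n
        rw [formula n] at this
        exact this
      have per1 : ∀ k : ℕ, champColoring (1 - k*c) = champColoring 1 := by
        intro k
        induction k with
        | zero => norm_num
        | succ k ih =>
          have h := hper (1 - ((k:ℤ)+1)*c)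
          have e : c + (1 - ((k:ℤ)+1)*c) = 1 - k*c := by ring
          rw [e] at h
          push_cast
          rw [← h]
          exact ih
      have per2 : ∀ k : ℕ, champColoring (1 + k*c) = champColoring 1 := by
        intro k
        induction k with
        | zero => norm_num
        | succ k ih =>
          have h := hper (1 + (k:ℤ)*c)
          have e : c + (1 + (k:ℤ)*c) = 1 + ((k:ℤ)+1)*c := by ring
          rw [e] at h
          push_cast
          rw [h]
          exact ih
      rcases lt_or_gt_of_ne hc with hneg | hpos
      · have h := per2 2
        rw [champColoring_one] at h
        have : (1 : ℤ) + 2*c < 0 := by omega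
        rw [champColoring_neg (by push_cast; omega)] at h
        exact Bool.false_ne_true h
      · have h := per1 2
        rw [champColoring_one] at h
        rw [champColoring_neg (by push_cast; omega)] at h
        exact Bool.false_ne_true h
    intro n
    rw [formula n, hc, zero_add]
  · -- f n = f 0 - n, contradiction
    exfalso
    have formula : ∀ n : ℤ, f n = f 0 - n := by
      intro n
      induction n using Int.induction_on with
      | zero => norm_num
      | succ k ih =>
        have := sconst (k : ℤ); omega
      | pred k ih =>
        have h := sconst (-(k:ℤ)-1)
        have e1 : (-(k:ℤ)-1)+1 = -k := by ring
        rw [e1] at h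
        omega
    set c := f 0 with hcdef
    obtain ⟨n0, hn0, htrue⟩ := champ_true_far (c.toNat + 1)
    have hgt : (n0 : ℤ) > c := by omega
    have h := hf (c - n0)
    rw [formula (c - n0)] at h
    have e : c - (c - (n0:ℤ)) = n0 := by ring
    have hpos : champColoring (n0 : ℤ) = true := by
      simp [champColoring, htrue]
    have hneg : champColoring (c - (n0:ℤ)) = false := champColoring_neg (by omega)
    rw [e, hpos, hneg] at h
    simp at h
end

section
/- Let Δ ∈ ℕ and let (X_k, x_k), k ∈ ℕ, be a sequence of pointed, infinite, connected simple graphs in which every vertex has degree at most Δ. Then there exist a strictly increasing function j : ℕ → ℕ, a countable type V, an infinite connected simple graph X on V in which every vertex has degree at most Δ, and a vertex x ∈ V, such that for every n ∈ ℕ there is N ∈ ℕ with the property that for all k ≥ N there is a graph isomorphism from the subgraph of X_{j(k)} induced on the disk D(x_{j(k)}, n) to the subgraph of X induced on the disk D(x, n) sending x_{j(k)} to x. -/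
open SimpleGraph
namespace Stmt16
variable {V : Type*} {G : SimpleGraph V}

/-- ball notation -/
def ball (G : SimpleGraph V) (x : V) (n : ℕ) : Set V := {v | G.dist x v ≤ n}

lemma mem_ball_self (G : SimpleGraph V) (x : V) (n : ℕ) : x ∈ ball G x n := by
  simp [ball, SimpleGraph.dist_self]

lemma exists_walk_induce {s : Set V} {u v : V} (p : G.Walk u v)
    (hs : ∀ w ∈ p.support, w ∈ s) (hu : u ∈ s) (hv : v ∈ s) :
    ∃ q : (G.induce s).Walk ⟨u, hu⟩ ⟨v, hv⟩, q.length = p.length := by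
  induction p with
  | nil => exact ⟨SimpleGraph.Walk.nil, rfl⟩
  | cons h p ih =>
    rename_i a b c
    have hb : b ∈ s := hs b (by simp [SimpleGraph.Walk.support_cons])
    obtain ⟨q, hq⟩ := ih (fun w hw => hs w (by simp [SimpleGraph.Walk.support_cons, hw])) hb hv
    exact ⟨SimpleGraph.Walk.cons (by exact h : (G.induce s).Adj ⟨a, hu⟩ ⟨b, hb⟩) q, congrArg (· + 1) hq⟩

lemma support_dist_le {x v : V} (p : G.Walk x v) {n : ℕ} (hp : p.length ≤ n) :
    ∀ w ∈ p.support, G.dist x w ≤ n := by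
  classical
  intro w hw
  calc G.dist x w ≤ (p.takeUntil w hw).length := SimpleGraph.dist_le _
    _ ≤ p.length := SimpleGraph.Walk.length_takeUntil_le p hw
    _ ≤ n := hp

/-- In the induced subgraph on a ball, distances from the center agree with ambient ones. -/
lemma dist_induce_ball (hconn : G.Connected) {x : V} {n : ℕ} (w : ball G x n) :
    (G.induce (ball G x n)).dist ⟨x, mem_ball_self G x n⟩ w = G.dist x w.1 := by
  obtain ⟨v, hv⟩ := w
  obtain ⟨p, hp⟩ := (hconn x v).exists_walk_length_eq_dist
  have hsupp : ∀ w ∈ p.support, w ∈ ball G x n := fun w hw =>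
    support_dist_le p (by rw [hp]; exact hv) w hw
  obtain ⟨q, hq⟩ := exists_walk_induce p hsupp (mem_ball_self G x n) hv
  apply le_antisymm
  · rw [← hp, ← hq]; exact SimpleGraph.dist_le q
  · -- map geodesic in the induced graph back to G
    have hreach : (G.induce (ball G x n)).Reachable ⟨x, mem_ball_self G x n⟩ ⟨v, hv⟩ := ⟨q⟩
    obtain ⟨r, hr⟩ := hreach.exists_walk_length_eq_dist
    have := SimpleGraph.dist_le (r.map (SimpleGraph.Embedding.induce (ball G x n)).toHom)
    rw [SimpleGraph.Walk.length_map] at this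
    simpa [hr] using this

/-- Decomposition: a vertex at distance ≤ n+1 is at distance ≤ n or adjacent to one. -/
lemma dist_succ_decomp (hconn : G.Connected) {x v : V} {n : ℕ} (h : G.dist x v ≤ n + 1) :
    G.dist x v ≤ n ∨ ∃ u, G.dist x u ≤ n ∧ G.Adj u v := by
  obtain ⟨p, hp⟩ := (hconn x v).exists_walk_length_eq_dist
  cases q : p.reverse with
  | nil =>
    left
    have : p.length = 0 := by
      have := congrArg SimpleGraph.Walk.length q
      simpa using this
    rw [hp] at this; omega
  | cons hadj r =>
    rename_i b
    right
    refine ⟨b, ?_, hadj.symm⟩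
    have hr : G.dist x b ≤ r.reverse.length := by
      have := SimpleGraph.dist_le r.reverse
      simpa [SimpleGraph.dist_comm] using this
    have hlen : p.length = r.length + 1 := by
      have := congrArg SimpleGraph.Walk.length q
      simpa using this
    rw [hp] at hlen
    simp only [SimpleGraph.Walk.length_reverse] at hr
    omega


/-- Balls are finite with cardinality bound. -/
lemma ball_subset_finset {Δ : ℕ} (hconn : G.Connected)
    (hdeg : ∀ v : V, (G.neighborSet v).encard ≤ Δ) (x : V) (n : ℕ) :
    ∃ T : Finset V, ball G x n ⊆ T ∧ T.card ≤ (Δ + 1) ^ n := by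
  classical
  have hnb : ∀ v : V, (G.neighborSet v).Finite := fun v =>
    Set.encard_lt_top_iff.mp (lt_of_le_of_lt (hdeg v) (by simp))
  induction n with
  | zero =>
    refine ⟨{x}, ?_, by simp⟩
    intro v hv
    simp only [ball, Set.mem_setOf_eq, Nat.le_zero] at hv
    simp [hconn.dist_eq_zero_iff.mp hv]
  | succ n ih =>
    obtain ⟨T, hT, hTc⟩ := ih
    refine ⟨T.biUnion (fun v => insert v (hnb v).toFinset), ?_, ?_⟩
    · intro v hv
      simp only [ball, Set.mem_setOf_eq] at hv
      rcases dist_succ_decomp hconn hv with h | ⟨u, hu, hadj⟩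
      · exact Finset.mem_biUnion.mpr ⟨v, hT h, by simp⟩
      · exact Finset.mem_biUnion.mpr ⟨u, hT hu, by simp [hadj, SimpleGraph.mem_neighborSet]⟩
    · calc (T.biUnion (fun v => insert v (hnb v).toFinset)).card ≤ T.card * (Δ + 1) := by
            apply Finset.card_biUnion_le_card_mul
            intro v _
            have : ((hnb v).toFinset).card ≤ Δ := by
              have h1 := hdeg v
              rw [(hnb v).encard_eq_coe_toFinset_card] at h1
              exact_mod_cast h1
            calc (insert v (hnb v).toFinset).card ≤ (hnb v).toFinset.card + 1 :=
                  Finset.card_insert_le _ _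
              _ ≤ Δ + 1 := by omega
        _ ≤ (Δ + 1) ^ n * (Δ + 1) := by exact Nat.mul_le_mul_right _ hTc
        _ = (Δ + 1) ^ (n + 1) := by ring

lemma ball_finite {Δ : ℕ} (hconn : G.Connected)
    (hdeg : ∀ v : V, (G.neighborSet v).encard ≤ Δ) (x : V) (n : ℕ) :
    (ball G x n).Finite := by
  obtain ⟨T, hT, -⟩ := ball_subset_finset hconn hdeg x n
  exact Set.Finite.subset T.finite_toSet hT

lemma ball_ncard_le {Δ : ℕ} (hconn : G.Connected)
    (hdeg : ∀ v : V, (G.neighborSet v).encard ≤ Δ) (x : V) (n : ℕ) :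
    (ball G x n).ncard ≤ (Δ + 1) ^ n := by
  obtain ⟨T, hT, hTc⟩ := ball_subset_finset hconn hdeg x n
  exact le_trans (Set.ncard_le_ncard hT T.finite_toSet) (by simpa using hTc)

/-- In an infinite connected graph with finite balls there are vertices at every distance. -/
lemma exists_dist_eq [Infinite V] {Δ : ℕ} (hconn : G.Connected)
    (hdeg : ∀ v : V, (G.neighborSet v).encard ≤ Δ) (x : V) (n : ℕ) :
    ∃ v : V, G.dist x v = n := by
  induction n with
  | zero => exact ⟨x, SimpleGraph.dist_self⟩
  | succ n _ =>
    -- there is a vertex outside the ball of radius n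
    have hfin := ball_finite hconn hdeg x n
    have : ∃ v, n < G.dist x v := by
      obtain ⟨v, hv⟩ := (Set.Finite.infinite_compl hfin).nonempty
      exact ⟨v, by simpa [ball, not_le] using hv⟩
    -- take the minimal distance exceeding n
    classical
    set S := {d : ℕ | n < d ∧ ∃ v, G.dist x v = d} with hS
    have hSne : S.Nonempty := by
      obtain ⟨v, hv⟩ := this
      exact ⟨G.dist x v, hv, v, rfl⟩
    obtain ⟨hm, v, hv⟩ : n < sInf S ∧ ∃ v, G.dist x v = sInf S := Nat.sInf_mem hSne
    rcases Nat.lt_or_ge (sInf S) (n + 2) with h | h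
    · exact ⟨v, by omega⟩
    · exfalso
      -- find a neighbor closer to x with distance sInf S - 1 > n, contradict minimality
      have hd : G.dist x v ≤ (sInf S - 1) + 1 := by omega
      rcases dist_succ_decomp hconn hd with h' | ⟨u, hu, hadj⟩
      · omega
      · have h1 : G.dist x v ≤ G.dist x u + 1 :=
          le_trans (hconn.dist_triangle (v := u)) (by
            have := SimpleGraph.dist_eq_one_iff_adj.mpr hadj
            omega)
        have h2 : n < G.dist x u := by omega
        have : sInf S ≤ G.dist x u := Nat.sInf_le ⟨h2, u, rfl⟩
        omega

lemma iso_dist_le {W : Type*} {H : SimpleGraph W} (f : G ≃g H) (a b : V) :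
    H.dist (f a) (f b) ≤ G.dist a b := by
  by_cases hr : G.Reachable a b
  · obtain ⟨p, hp⟩ := hr.exists_walk_length_eq_dist
    have := SimpleGraph.dist_le (p.map f.toHom)
    simpa [hp] using this
  · rw [SimpleGraph.dist_eq_zero_of_not_reachable hr,
      SimpleGraph.dist_eq_zero_of_not_reachable]
    intro hr'
    exact hr (by simpa using hr'.map f.symm.toHom)

/-- Graph isomorphisms preserve distances. -/
lemma iso_dist {W : Type*} {H : SimpleGraph W} (e : G ≃g H) (u v : V) :
    H.dist (e u) (e v) = G.dist u v := by
  refine le_antisymm (iso_dist_le e u v) ?_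
  have := iso_dist_le e.symm (e u) (e v)
  simpa using this


/-- code space -/
abbrev Cd (B : ℕ) := Σ m : Fin (B + 1), (Fin m → Fin m → Prop) × Fin m

instance (B : ℕ) : Finite (Cd B) := by infer_instance

lemma sigma_helper {B : ℕ} {m1 m2 : Fin (B+1)} {A1 : Fin m1 → Fin m1 → Prop}
    {A2 : Fin m2 → Fin m2 → Prop} {p1 : Fin m1} {p2 : Fin m2}
    (h : (⟨m1, A1, p1⟩ : Cd B) = ⟨m2, A2, p2⟩) :
    ∃ e : Fin (m1 : ℕ) ≃ Fin (m2 : ℕ), (∀ i j, A1 i j ↔ A2 (e i) (e j)) ∧ e p1 = p2 := by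
  injection h with h1 h2
  subst h1
  have h3 := eq_of_heq h2
  injection h3 with hA hp
  subst hA; subst hp
  exact ⟨Equiv.refl _, fun i j => Iff.rfl, rfl⟩

noncomputable def code {V : Type*} (G : SimpleGraph V) (x : V) (B n : ℕ)
    (h1 : (ball G x n).Finite) (h2 : (ball G x n).ncard ≤ B) : Cd B :=
  haveI : Fintype (ball G x n) := h1.fintype
  let e := Fintype.equivFin (ball G x n)
  ⟨⟨Fintype.card (ball G x n), by
      have : Fintype.card (ball G x n) = (ball G x n).ncard := by
        rw [Set.ncard_eq_toFinset_card']
        simp [Set.toFinset_card]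
      omega⟩,
    fun i j => G.Adj (e.symm i).1 (e.symm j).1, e ⟨x, mem_ball_self G x n⟩⟩



lemma code_eq_iso {V1 V2 : Type*} {G1 : SimpleGraph V1} {G2 : SimpleGraph V2}
    {x1 : V1} {x2 : V2} {B n : ℕ}
    {h1 : (ball G1 x1 n).Finite} {h2 : (ball G1 x1 n).ncard ≤ B}
    {h1' : (ball G2 x2 n).Finite} {h2' : (ball G2 x2 n).ncard ≤ B}
    (h : code G1 x1 B n h1 h2 = code G2 x2 B n h1' h2') :
    ∃ φ : (G1.induce (ball G1 x1 n)) ≃g (G2.induce (ball G2 x2 n)),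
      φ ⟨x1, mem_ball_self G1 x1 n⟩ = ⟨x2, mem_ball_self G2 x2 n⟩ := by
  letI : Fintype (ball G1 x1 n) := h1.fintype
  letI : Fintype (ball G2 x2 n) := h1'.fintype
  unfold code at h
  obtain ⟨e, hA, hp⟩ := sigma_helper h
  set e1 := Fintype.equivFin (ball G1 x1 n) with he1
  set e2 := Fintype.equivFin (ball G2 x2 n) with he2
  refine ⟨⟨e1.trans (e.trans e2.symm), ?_⟩, ?_⟩
  · intro a b
    have := (hA (e1 a) (e1 b)).symm
    simpa [SimpleGraph.comap_adj] using this
  · show e2.symm (e (e1 _)) = _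
    rw [hp]
    simp



lemma extract_const {C : Type*} [Finite C] (f : ℕ → C) :
    ∃ σ : ℕ → ℕ, StrictMono σ ∧ ∀ a b, f (σ a) = f (σ b) := by
  obtain ⟨c, hc⟩ := Finite.exists_infinite_fiber f
  have hinf : {k : ℕ | f k = c}.Infinite := by
    rw [Set.infinite_coe_iff] at hc
    convert hc using 1
    rfl
  refine ⟨Nat.nth (fun k => f k = c), Nat.nth_strictMono hinf, fun a b => ?_⟩
  rw [Nat.nth_mem_of_infinite hinf a, Nat.nth_mem_of_infinite hinf b]

/-- Diagonal extraction. -/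
lemma diagonal {C : ℕ → Type*} [∀ n, Finite (C n)] (t : ∀ n, ℕ → C n) :
    ∃ j : ℕ → ℕ, StrictMono j ∧
      ∀ n k k', n < k → n < k' → t n (j k) = t n (j k') := by
  classical
  let step : ∀ n, (ℕ → ℕ) → (ℕ → ℕ) := fun n g =>
    g ∘ (extract_const (fun k => t n (g k))).choose
  let Φ : ℕ → (ℕ → ℕ) := fun n => Nat.rec id step n
  have hΦs : ∀ n, Φ (n + 1) = step n (Φ n) := fun n => rfl
  have hmono : ∀ n, StrictMono (Φ n) := by
    intro n
    induction n with
    | zero => exact fun a b h => h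
    | succ n ih =>
      rw [hΦs]
      exact ih.comp (extract_const (fun k => t n (Φ n k))).choose_spec.1
  have hconst : ∀ n a b, t n (Φ (n + 1) a) = t n (Φ (n + 1) b) := by
    intro n a b
    exact (extract_const (fun k => t n (Φ n k))).choose_spec.2 a b
  have hge : ∀ n k, Φ n k ≥ k := fun n k => (hmono n).le_apply
  have hfact : ∀ n m, n ≤ m → ∀ k, ∃ r, Φ m k = Φ n r := by
    intro n m hnm
    induction m with
    | zero =>
      intro k
      have : n = 0 := Nat.le_zero.mp hnm
      subst this
      exact ⟨k, rfl⟩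
    | succ m ih =>
      intro k
      rcases Nat.lt_or_ge n (m+1) with h | h
      · obtain ⟨r, hr⟩ := ih (by omega) ((extract_const (fun k' => t m (Φ m k'))).choose k)
        exact ⟨r, hr ▸ rfl⟩
      · have : n = m + 1 := by omega
        subst this; exact ⟨k, rfl⟩
  refine ⟨fun k => Φ k k, ?_, ?_⟩
  · apply strictMono_nat_of_lt_succ
    intro k
    calc Φ k k < Φ k (k+1) := (hmono k) (by omega)
      _ ≤ Φ k ((extract_const (fun k' => t k (Φ k k'))).choose (k+1)) :=
          (hmono k).monotone ((extract_const (fun k' => t k (Φ k k'))).choose_spec.1.le_apply)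
      _ = Φ (k+1) (k+1) := rfl
  · intro n k k' hk hk'
    obtain ⟨r, hr⟩ := hfact (n+1) k hk k
    obtain ⟨r', hr'⟩ := hfact (n+1) k' hk' k'
    show t n (Φ k k) = t n (Φ k' k')
    rw [hr, hr']
    exact hconst n r r'



lemma reachable_induce_ball {V : Type*} {G : SimpleGraph V} (hconn : G.Connected)
    {x : V} {n : ℕ} (w : ball G x n) :
    (G.induce (ball G x n)).Reachable ⟨x, mem_ball_self G x n⟩ w := by
  obtain ⟨v, hv⟩ := w
  obtain ⟨p, hp⟩ := (hconn x v).exists_walk_length_eq_dist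
  have hsupp : ∀ w ∈ p.support, w ∈ ball G x n := fun w hw =>
    support_dist_le p (by rw [hp]; exact hv) w hw
  obtain ⟨q, -⟩ := exists_walk_induce p hsupp (mem_ball_self G x n) hv
  exact ⟨q⟩

section Chain

variable {Δ : ℕ} {V' : ℕ → Type} (Y : ∀ n, SimpleGraph (V' n)) (y : ∀ n, V' n)
  (hconn : ∀ n, (Y n).Connected)
  (hdeg : ∀ n, ∀ v : V' n, ((Y n).neighborSet v).encard ≤ (Δ : ℕ∞))
  (ψ : ∀ n, ((Y (n+1)).induce (ball (Y (n+1)) (y (n+1)) n)) ≃g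
            ((Y n).induce (ball (Y n) (y n) n)))
  (hψ : ∀ n, (ψ n) ⟨y (n+1), mem_ball_self _ _ _⟩ = ⟨y n, mem_ball_self _ _ _⟩)

noncomputable def ballFintype (n m : ℕ) : Fintype (ball (Y n) (y n) m) :=
  (ball_finite (hconn n) (hdeg n) (y n) m).fintype

noncomputable def freshIdx (n : ℕ) (v : ball (Y (n+1)) (y (n+1)) (n+1)) : ℕ :=
  letI := ballFintype Y y hconn hdeg (n+1) (n+1)
  (Fintype.equivFin _ v).val

noncomputable def supF (n : ℕ) (f : (ball (Y n) (y n) n) → ℕ) : ℕ :=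
  letI := ballFintype Y y hconn hdeg (n+1) n
  Finset.univ.sup (fun w : (ball (Y (n+1)) (y (n+1)) n) => f ((ψ n) w))

noncomputable def chainF : ∀ n, (ball (Y n) (y n) n) → ℕ
  | 0 => fun _ => 0
  | (n+1) => fun v =>
      if h : (Y (n+1)).dist (y (n+1)) v.1 ≤ n then
        chainF n ((ψ n) ⟨v.1, h⟩)
      else
        supF Y y hconn hdeg ψ n (chainF n) + 1 + freshIdx Y y hconn hdeg n v

local notation "F" => chainF Y y hconn hdeg ψ
local notation "S" n => ball (Y n) (y n) n

lemma chainF_pos {n : ℕ} (v : ball (Y (n+1)) (y (n+1)) (n+1))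
    (h : (Y (n+1)).dist (y (n+1)) v.1 ≤ n) :
    F (n+1) v = F n ((ψ n) ⟨v.1, h⟩) := by
  show dite _ _ _ = _
  rw [dif_pos h]

lemma freshIdx_inj (n : ℕ) : Function.Injective (freshIdx Y y hconn hdeg n) := by
  intro a b hab
  unfold freshIdx at hab
  letI := ballFintype Y y hconn hdeg (n+1) (n+1)
  exact (Fintype.equivFin _).injective (Fin.val_injective hab)

lemma le_supF {n : ℕ} (f : (ball (Y n) (y n) n) → ℕ) (u : ball (Y n) (y n) n) :
    f u ≤ supF Y y hconn hdeg ψ n f := by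
  unfold supF
  letI := ballFintype Y y hconn hdeg (n+1) n
  have : f u = f ((ψ n) ((ψ n).symm u)) := by rw [RelIso.apply_symm_apply]
  rw [this]
  exact Finset.le_sup (f := fun w => f ((ψ n) w)) (Finset.mem_univ ((ψ n).symm u))

lemma chainF_neg {n : ℕ} (v : ball (Y (n+1)) (y (n+1)) (n+1))
    (h : ¬ ((Y (n+1)).dist (y (n+1)) v.1 ≤ n)) :
    F (n+1) v = supF Y y hconn hdeg ψ n (F n) + 1 + freshIdx Y y hconn hdeg n v := by
  show dite _ _ _ = _
  rw [dif_neg h]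

lemma chainF_lt {n : ℕ} (u : ball (Y n) (y n) n) (v : ball (Y (n+1)) (y (n+1)) (n+1))
    (h : ¬ ((Y (n+1)).dist (y (n+1)) v.1 ≤ n)) :
    F n u < F (n+1) v := by
  rw [chainF_neg Y y hconn hdeg ψ v h]
  have := le_supF Y y hconn hdeg ψ (F n) u
  omega

lemma chainF_inj : ∀ n, Function.Injective (F n) := by
  intro n
  induction n with
  | zero =>
    intro a b _
    have ha := (hconn 0).dist_eq_zero_iff.mp (Nat.le_zero.mp a.2)
    have hb := (hconn 0).dist_eq_zero_iff.mp (Nat.le_zero.mp b.2)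
    exact Subtype.ext (ha.symm.trans hb)
  | succ n ih =>
    intro a b hab
    by_cases ha : (Y (n+1)).dist (y (n+1)) a.1 ≤ n <;>
      by_cases hb : (Y (n+1)).dist (y (n+1)) b.1 ≤ n
    · rw [chainF_pos Y y hconn hdeg ψ a ha, chainF_pos Y y hconn hdeg ψ b hb] at hab
      have := ih hab
      have h2 : (⟨a.1, ha⟩ : ball (Y (n+1)) (y (n+1)) n) = ⟨b.1, hb⟩ :=
        (ψ n).injective this
      have h3 := Subtype.ext_iff.mp h2
      exact Subtype.ext h3
    · rw [chainF_pos Y y hconn hdeg ψ a ha] at hab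
      exact absurd hab (Nat.ne_of_lt (chainF_lt Y y hconn hdeg ψ _ b hb))
    · rw [chainF_pos Y y hconn hdeg ψ b hb] at hab
      exact absurd hab.symm (Nat.ne_of_lt (chainF_lt Y y hconn hdeg ψ _ a ha))
    · rw [chainF_neg Y y hconn hdeg ψ a ha, chainF_neg Y y hconn hdeg ψ b hb] at hab
      have : freshIdx Y y hconn hdeg n a = freshIdx Y y hconn hdeg n b := by omega
      exact freshIdx_inj Y y hconn hdeg n this


include hconn hdeg hψ in
lemma psi_dist (n : ℕ) (v : ball (Y (n+1)) (y (n+1)) n) :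
    (Y n).dist (y n) ((ψ n) v).1 = (Y (n+1)).dist (y (n+1)) v.1 := by
  have h1 := dist_induce_ball (hconn n) ((ψ n) v)
  have h2 := dist_induce_ball (hconn (n+1)) v
  have h3 := iso_dist (ψ n) ⟨y (n+1), mem_ball_self _ _ _⟩ v
  rw [hψ n] at h3
  rw [← h1, h3, h2]

include hψ in
lemma chainF_base : ∀ n, F n ⟨y n, mem_ball_self _ _ _⟩ = 0 := by
  intro n
  induction n with
  | zero => rfl
  | succ n ih =>
    have h : (Y (n+1)).dist (y (n+1)) (y (n+1)) ≤ n := by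
      simp [SimpleGraph.dist_self]
    rw [chainF_pos Y y hconn hdeg ψ _ h]
    show F n ((ψ n) ⟨y (n+1), mem_ball_self _ _ _⟩) = 0
    rw [hψ n]
    exact ih

lemma range_mono (n : ℕ) : Set.range (F n) ⊆ Set.range (F (n+1)) := by
  rintro a ⟨v, rfl⟩
  have hw : (Y (n+1)).dist (y (n+1)) ((ψ n).symm v).1 ≤ n := ((ψ n).symm v).2
  refine ⟨⟨((ψ n).symm v).1, le_trans hw (by omega)⟩, ?_⟩
  rw [chainF_pos Y y hconn hdeg ψ _ hw]
  show F n ((ψ n) ((ψ n).symm v)) = F n v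
  rw [RelIso.apply_symm_apply]

lemma range_mono_le {m m' : ℕ} (h : m ≤ m') : Set.range (F m) ⊆ Set.range (F m') := by
  induction m' with
  | zero => have : m = 0 := by omega
            subst this; exact subset_rfl
  | succ m' ih =>
    rcases Nat.lt_or_ge m (m'+1) with h' | h'
    · exact subset_trans (ih (by omega)) (range_mono Y y hconn hdeg ψ m')
    · have : m = m' + 1 := by omega
      subst this; exact subset_rfl

include hψ in
lemma range_iff : ∀ m, ∀ k, k ≤ m → ∀ v : ball (Y m) (y m) m,
    (F m v ∈ Set.range (F k) ↔ (Y m).dist (y m) v.1 ≤ k) := by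
  intro m
  induction m with
  | zero =>
    intro k hk v
    have : k = 0 := by omega
    subst this
    constructor
    · intro _; exact v.2
    · intro _; exact ⟨v, rfl⟩
  | succ m ih =>
    intro k hk v
    rcases Nat.lt_or_ge k (m+1) with hk' | hk'
    · have hkm : k ≤ m := by omega
      constructor
      · intro hmem
        have hd : (Y (m+1)).dist (y (m+1)) v.1 ≤ m := by
          by_contra hcon
          obtain ⟨u, hu⟩ := range_mono_le Y y hconn hdeg ψ hkm hmem
          exact absurd hu (Nat.ne_of_lt (chainF_lt Y y hconn hdeg ψ u v hcon))
        rw [chainF_pos Y y hconn hdeg ψ v hd] at hmem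
        have := (ih k hkm ((ψ m) ⟨v.1, hd⟩)).mp hmem
        rwa [psi_dist Y y hconn hdeg ψ hψ m ⟨v.1, hd⟩] at this
      · intro hdk
        have hd : (Y (m+1)).dist (y (m+1)) v.1 ≤ m := le_trans hdk hkm
        rw [chainF_pos Y y hconn hdeg ψ v hd]
        apply (ih k hkm _).mpr
        rw [psi_dist Y y hconn hdeg ψ hψ m ⟨v.1, hd⟩]
        exact hdk
    · have : k = m + 1 := by omega
      subst this
      exact ⟨fun _ => v.2, fun _ => ⟨v, rfl⟩⟩

lemma edge_push (n : ℕ) (v w : ball (Y n) (y n) n)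
    (hvw : ((Y n).induce (ball (Y n) (y n) n)).Adj v w) :
    ∃ v' w' : ball (Y (n+1)) (y (n+1)) (n+1),
      F (n+1) v' = F n v ∧ F (n+1) w' = F n w ∧
      ((Y (n+1)).induce (ball (Y (n+1)) (y (n+1)) (n+1))).Adj v' w' := by
  set a := (ψ n).symm v with ha
  set b := (ψ n).symm w with hb
  have hab : ((Y (n+1)).induce (ball (Y (n+1)) (y (n+1)) n)).Adj a b := by
    apply (ψ n).map_rel_iff.mp
    rw [ha, hb, RelIso.apply_symm_apply, RelIso.apply_symm_apply]
    exact hvw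
  refine ⟨⟨a.1, le_trans a.2 (Nat.le_succ n)⟩, ⟨b.1, le_trans b.2 (Nat.le_succ n)⟩, ?_, ?_, ?_⟩
  · rw [chainF_pos Y y hconn hdeg ψ _ a.2]
    show F n ((ψ n) ((ψ n).symm v)) = F n v
    rw [RelIso.apply_symm_apply]
  · rw [chainF_pos Y y hconn hdeg ψ _ b.2]
    show F n ((ψ n) ((ψ n).symm w)) = F n w
    rw [RelIso.apply_symm_apply]
  · exact hab

lemma edge_push_le {n m : ℕ} (hnm : n ≤ m) (v w : ball (Y n) (y n) n)
    (hvw : ((Y n).induce (ball (Y n) (y n) n)).Adj v w) :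
    ∃ v' w' : ball (Y m) (y m) m,
      F m v' = F n v ∧ F m w' = F n w ∧
      ((Y m).induce (ball (Y m) (y m) m)).Adj v' w' := by
  induction m with
  | zero =>
    have : n = 0 := by omega
    subst this
    exact ⟨v, w, rfl, rfl, hvw⟩
  | succ m ih =>
    rcases Nat.lt_or_ge n (m+1) with h' | h'
    · obtain ⟨v', w', h1, h2, h3⟩ := ih (by omega)
      obtain ⟨v'', w'', g1, g2, g3⟩ := edge_push Y y hconn hdeg ψ m v' w' h3
      exact ⟨v'', w'', g1.trans h1, g2.trans h2, g3⟩
    · have : n = m + 1 := by omega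
      subst this
      exact ⟨v, w, rfl, rfl, hvw⟩

include hψ in
lemma edge_pull : ∀ m k, k ≤ m → ∀ v w : ball (Y m) (y m) m,
    (Y m).dist (y m) v.1 ≤ k → (Y m).dist (y m) w.1 ≤ k →
    ((Y m).induce (ball (Y m) (y m) m)).Adj v w →
    ∃ v' w' : ball (Y k) (y k) k,
      F k v' = F m v ∧ F k w' = F m w ∧
      ((Y k).induce (ball (Y k) (y k) k)).Adj v' w' := by
  intro m
  induction m with
  | zero =>
    intro k hk v w _ _ hvw
    have : k = 0 := by omega
    subst this
    exact ⟨v, w, rfl, rfl, hvw⟩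
  | succ m ih =>
    intro k hk v w hv hw hvw
    rcases Nat.lt_or_ge k (m+1) with hk' | hk'
    · have hkm : k ≤ m := by omega
      have hvm : (Y (m+1)).dist (y (m+1)) v.1 ≤ m := le_trans hv hkm
      have hwm : (Y (m+1)).dist (y (m+1)) w.1 ≤ m := le_trans hw hkm
      have hab : ((Y (m+1)).induce (ball (Y (m+1)) (y (m+1)) m)).Adj ⟨v.1, hvm⟩ ⟨w.1, hwm⟩ :=
        hvw
      have hadj2 : ((Y m).induce (ball (Y m) (y m) m)).Adj ((ψ m) ⟨v.1, hvm⟩) ((ψ m) ⟨w.1, hwm⟩) :=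
        (ψ m).map_rel_iff.mpr hab
      have hdv : (Y m).dist (y m) ((ψ m) ⟨v.1, hvm⟩).1 ≤ k := by
        rw [psi_dist Y y hconn hdeg ψ hψ m ⟨v.1, hvm⟩]; exact hv
      have hdw : (Y m).dist (y m) ((ψ m) ⟨w.1, hwm⟩).1 ≤ k := by
        rw [psi_dist Y y hconn hdeg ψ hψ m ⟨w.1, hwm⟩]; exact hw
      obtain ⟨v', w', h1, h2, h3⟩ := ih k hkm _ _ hdv hdw hadj2
      refine ⟨v', w', ?_, ?_, h3⟩
      · rw [h1, ← chainF_pos Y y hconn hdeg ψ v hvm]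
      · rw [h2, ← chainF_pos Y y hconn hdeg ψ w hwm]
    · have : k = m + 1 := by omega
      subst this
      exact ⟨v, w, rfl, rfl, hvw⟩

include hconn hdeg hψ in
theorem chain_limit (hinf : ∀ n, Infinite (V' n)) :
    ∃ (W : Type) (GW : SimpleGraph W) (xW : W),
      Countable W ∧ Infinite W ∧ GW.Connected ∧
      (∀ w : W, (GW.neighborSet w).encard ≤ (Δ : ℕ∞)) ∧
      ∀ n : ℕ, ∃ h : ((Y n).induce (ball (Y n) (y n) n)) ≃g
          (GW.induce {w | GW.dist xW w ≤ n}),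
        ((h ⟨y n, mem_ball_self _ _ _⟩ : _) : _) = xW := by
  classical
  set R : Set ℕ := {a | ∃ n, ∃ v : ball (Y n) (y n) n, F n v = a} with hRdef
  let GW : SimpleGraph R :=
    { Adj := fun a b => ∃ n, ∃ v w : ball (Y n) (y n) n,
        F n v = a.1 ∧ F n w = b.1 ∧ ((Y n).induce (ball (Y n) (y n) n)).Adj v w
      symm := by
        constructor
        rintro a b ⟨n, v, w, h1, h2, h3⟩
        exact ⟨n, w, v, h2, h1, h3.symm⟩
      loopless := by
        constructor
        rintro a ⟨n, v, w, h1, h2, h3⟩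
        have : v = w := chainF_inj Y y hconn hdeg ψ n (h1.trans h2.symm)
        subst this
        exact (SimpleGraph.irrefl _) h3 }
  have hadjGW : ∀ a b : R, GW.Adj a b ↔ ∃ n, ∃ v w : ball (Y n) (y n) n,
      F n v = a.1 ∧ F n w = b.1 ∧ ((Y n).induce (ball (Y n) (y n) n)).Adj v w := fun a b => Iff.rfl
  let xW : R := ⟨F 0 ⟨y 0, mem_ball_self _ _ _⟩, ⟨0, _, rfl⟩⟩
  -- the homomorphism from each ball into GW
  let hom : ∀ n, ((Y n).induce (ball (Y n) (y n) n)) →g GW := fun n =>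
    { toFun := fun v => (⟨F n v, ⟨n, v, rfl⟩⟩ : R)
      map_rel' := fun {v w} h => ⟨n, v, w, rfl, rfl, h⟩ }
  have hom_base : ∀ n, hom n ⟨y n, mem_ball_self _ _ _⟩ = xW := by
    intro n
    exact Subtype.ext (chainF_base Y y hconn hdeg ψ hψ n)
  -- distance bound from xW
  have key1 : ∀ n (v : ball (Y n) (y n) n), GW.dist xW (hom n v) ≤ n := by
    intro n v
    obtain ⟨p, hp⟩ := (reachable_induce_ball (hconn n) v).exists_walk_length_eq_dist
    have hlen : p.length ≤ n := by
      rw [hp, dist_induce_ball (hconn n) v]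
      exact v.2
    have := SimpleGraph.dist_le (p.map (hom n))
    rw [SimpleGraph.Walk.length_map] at this
    rw [← hom_base n]
    omega
  have reach : ∀ a : R, GW.Reachable xW a := by
    rintro ⟨a, n, v, rfl⟩
    obtain ⟨p, -⟩ := (reachable_induce_ball (hconn n) v).exists_walk_length_eq_dist
    have : GW.Reachable (hom n ⟨y n, mem_ball_self _ _ _⟩) (hom n v) := ⟨p.map (hom n)⟩
    rwa [hom_base n] at this
  have hconnW : GW.Connected := by
    rw [SimpleGraph.connected_iff]
    exact ⟨fun a b => (reach a).symm.trans (reach b), ⟨xW⟩⟩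
  -- distance characterization
  have key2 : ∀ (a : R) (n : ℕ), GW.dist xW a ≤ n ↔ a.1 ∈ Set.range (F n) := by
    have walkR : ∀ (c a : R) (p : GW.Walk c a) (r : ℕ),
        c.1 ∈ Set.range (F r) → a.1 ∈ Set.range (F (r + p.length)) := by
      intro c a p
      induction p with
      | nil => intro r hc; simpa using hc
      | cons h q ih =>
        rename_i c' d' a'
        intro r hc
        obtain ⟨m, v, w, hv, hw, hadj⟩ := h
        have hd : d'.1 ∈ Set.range (F (r+1)) := by
          rcases le_or_gt m (r+1) with hm | hm
          · exact range_mono_le Y y hconn hdeg ψ hm ⟨w, hw⟩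
          · have hrm : r ≤ m := by omega
            have h1 : F m v ∈ Set.range (F r) := by rw [hv]; exact hc
            have hdistv := (range_iff Y y hconn hdeg ψ hψ m r hrm v).mp h1
            have hadj' : (Y m).Adj v.1 w.1 := hadj
            have hdw : (Y m).dist (y m) w.1 ≤ r + 1 := by
              have ht := (hconn m).dist_triangle (u := y m) (v := v.1) (w := w.1)
              have h2 : (Y m).dist v.1 w.1 = 1 := SimpleGraph.dist_eq_one_iff_adj.mpr hadj'
              omega
            have := (range_iff Y y hconn hdeg ψ hψ m (r+1) (by omega) w).mpr hdw
            rwa [hw] at this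
        have := ih (r+1) hd
        rw [SimpleGraph.Walk.length_cons]
        have heq : r + 1 + q.length = r + (q.length + 1) := by omega
        rwa [heq] at this
    intro a n
    constructor
    · intro hdist
      obtain ⟨p, hp⟩ := (reach a).exists_walk_length_eq_dist
      have h0 : xW.1 ∈ Set.range (F 0) := ⟨⟨y 0, mem_ball_self _ _ _⟩, rfl⟩
      have := walkR xW a p 0 h0
      rw [hp] at this
      rw [Nat.zero_add] at this
      exact range_mono_le Y y hconn hdeg ψ hdist this
    · rintro ⟨v, hv⟩
      have : a = hom n v := Subtype.ext hv.symm
      rw [this]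
      exact key1 n v
  -- adjacency characterization at any sufficiently late stage
  have key3 : ∀ (a b : R) (n : ℕ), a.1 ∈ Set.range (F n) → b.1 ∈ Set.range (F n) →
      GW.Adj a b → ∃ v w : ball (Y n) (y n) n,
        F n v = a.1 ∧ F n w = b.1 ∧ ((Y n).induce (ball (Y n) (y n) n)).Adj v w := by
    rintro a b n ha hb ⟨m, v, w, hv, hw, hadj⟩
    rcases le_or_gt m n with hm | hm
    · obtain ⟨v', w', h1, h2, h3⟩ := edge_push_le Y y hconn hdeg ψ hm v w hadj
      exact ⟨v', w', h1.trans hv, h2.trans hw, h3⟩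
    · have hnm : n ≤ m := by omega
      have hdv := (range_iff Y y hconn hdeg ψ hψ m n hnm v).mp (by rw [hv]; exact ha)
      have hdw := (range_iff Y y hconn hdeg ψ hψ m n hnm w).mp (by rw [hw]; exact hb)
      obtain ⟨v', w', h1, h2, h3⟩ := edge_pull Y y hconn hdeg ψ hψ m n hnm v w hdv hdw hadj
      exact ⟨v', w', h1.trans hv, h2.trans hw, h3⟩
  refine ⟨R, GW, xW, inferInstance, ?_, hconnW, ?_, ?_⟩
  · -- Infinite
    have fresh : ∀ n : ℕ, ∃ a : R, a.1 ∈ Set.range (F (n+1)) ∧ a.1 ∉ Set.range (F n) := by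
      intro n
      haveI := hinf (n+1)
      obtain ⟨v, hv⟩ := exists_dist_eq (hconn (n+1)) (hdeg (n+1)) (y (n+1)) (n+1)
      have hvm : v ∈ ball (Y (n+1)) (y (n+1)) (n+1) := le_of_eq hv
      refine ⟨⟨F (n+1) ⟨v, hvm⟩, ⟨n+1, _, rfl⟩⟩, ⟨⟨v, hvm⟩, rfl⟩, ?_⟩
      intro hmem
      have := (range_iff Y y hconn hdeg ψ hψ (n+1) n (Nat.le_succ n) ⟨v, hvm⟩).mp hmem
      simp only at this
      omega
    choose g hg1 hg2 using fresh
    have key : ∀ m n : ℕ, m < n → g m ≠ g n := by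
      intro m n h hq
      have h1 := range_mono_le Y y hconn hdeg ψ (show m+1 ≤ n by omega) (hg1 m)
      rw [hq] at h1
      exact hg2 n h1
    have hginj : Function.Injective g := by
      intro m n hmn
      by_contra hne
      rcases Nat.lt_or_ge m n with h | h
      · exact key m n h hmn
      · exact key n m (by omega) hmn.symm
    exact Infinite.of_injective g hginj
  · -- degree bound
    intro a
    set d := GW.dist xW a with hd
    have ha : a.1 ∈ Set.range (F (d+1)) := (key2 a (d+1)).mp (by omega)
    obtain ⟨v₀, hv₀⟩ := ha
    have hnb : ∀ b ∈ GW.neighborSet a, b.1 ∈ Set.range (F (d+1)) := by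
      intro b hb
      apply (key2 b (d+1)).mp
      have ht := hconnW.dist_triangle (u := xW) (v := a) (w := b)
      have h1 : GW.dist a b = 1 := SimpleGraph.dist_eq_one_iff_adj.mpr hb
      omega
    classical
    set f : R → V' (d+1) := fun b =>
      if h : b ∈ GW.neighborSet a then
        (key3 a b (d+1) ⟨v₀, hv₀⟩ (hnb b h) h).choose_spec.choose.1
      else v₀.1 with hfdef
    have hspec : ∀ b (h : b ∈ GW.neighborSet a),
        F (d+1) (key3 a b (d+1) ⟨v₀, hv₀⟩ (hnb b h) h).choose = a.1 ∧
        F (d+1) (key3 a b (d+1) ⟨v₀, hv₀⟩ (hnb b h) h).choose_spec.choose = b.1 ∧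
        ((Y (d+1)).induce (ball (Y (d+1)) (y (d+1)) (d+1))).Adj
          (key3 a b (d+1) ⟨v₀, hv₀⟩ (hnb b h) h).choose
          (key3 a b (d+1) ⟨v₀, hv₀⟩ (hnb b h) h).choose_spec.choose := by
      intro b h
      exact (key3 a b (d+1) ⟨v₀, hv₀⟩ (hnb b h) h).choose_spec.choose_spec
    have hmaps : Set.MapsTo f (GW.neighborSet a) ((Y (d+1)).neighborSet v₀.1) := by
      intro b hb
      obtain ⟨h1, h2, h3⟩ := hspec b hb
      have hv : (key3 a b (d+1) ⟨v₀, hv₀⟩ (hnb b hb) hb).choose = v₀ :=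
        chainF_inj Y y hconn hdeg ψ (d+1) (h1.trans hv₀.symm)
      have h4 : (Y (d+1)).Adj ((key3 a b (d+1) ⟨v₀, hv₀⟩ (hnb b hb) hb).choose).1
          ((key3 a b (d+1) ⟨v₀, hv₀⟩ (hnb b hb) hb).choose_spec.choose).1 := h3
      have h5 : ((key3 a b (d+1) ⟨v₀, hv₀⟩ (hnb b hb) hb).choose).1 = v₀.1 :=
        congrArg Subtype.val hv
      rw [h5] at h4
      have : (Y (d+1)).Adj v₀.1 ((key3 a b (d+1) ⟨v₀, hv₀⟩ (hnb b hb) hb).choose_spec.choose).1 := h4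
      show f b ∈ _
      rw [hfdef]
      simp only [dif_pos hb]
      exact this
    have hinj : Set.InjOn f (GW.neighborSet a) := by
      intro b hb b' hb' hff
      obtain ⟨-, h2, -⟩ := hspec b hb
      obtain ⟨-, h2', -⟩ := hspec b' hb'
      rw [hfdef] at hff
      simp only [dif_pos hb, dif_pos hb'] at hff
      have : (key3 a b (d+1) ⟨v₀, hv₀⟩ (hnb b hb) hb).choose_spec.choose =
          (key3 a b' (d+1) ⟨v₀, hv₀⟩ (hnb b' hb') hb').choose_spec.choose := Subtype.ext hff
      rw [this] at h2
      exact Subtype.ext (h2.symm.trans h2')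
    exact le_trans (Set.encard_le_encard_of_injOn hmaps hinj) (hdeg (d+1) v₀.1)
  · -- the isomorphisms
    intro n
    have hbij : Function.Bijective (fun v : ball (Y n) (y n) n =>
        (⟨hom n v, (key2 (hom n v) n).mpr ⟨v, rfl⟩⟩ : {w : R | GW.dist xW w ≤ n})) := by
      constructor
      · intro v w h
        have h1 : F n v = F n w := congrArg (fun z => z.1.1) h
        exact chainF_inj Y y hconn hdeg ψ n h1
      · intro b
        obtain ⟨v, hv⟩ := (key2 b.1 n).mp b.2
        exact ⟨v, Subtype.ext (Subtype.ext hv)⟩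
    refine ⟨{ toEquiv := Equiv.ofBijective _ hbij, map_rel_iff' := ?_ }, ?_⟩
    · intro v w
      constructor
      · intro h
        have h' : GW.Adj (hom n v) (hom n w) := h
        obtain ⟨v', w', h1, h2, h3⟩ := key3 (hom n v) (hom n w) n ⟨v, rfl⟩ ⟨w, rfl⟩ h'
        have hv' : v' = v := chainF_inj Y y hconn hdeg ψ n h1
        have hw' : w' = w := chainF_inj Y y hconn hdeg ψ n h2
        rw [hv', hw'] at h3
        exact h3
      · intro h
        exact (⟨n, v, w, rfl, rfl, h⟩ : GW.Adj (hom n v) (hom n w))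
    · exact hom_base n

end Chain

end Stmt16

/-- Let Δ ∈ ℕ and let (X_k, x_k) be a sequence of pointed, infinite,
connected simple graphs of maximum degree at most Δ. Then there exist a subsequence
j, a pointed, infinite, connected simple graph (X,x) on a countable vertex type V of
maximum degree at most Δ, such that for every n ∈ ℕ, for all large enough k, the disk
D(x_{j(k)}, n) in X_{j(k)} is isomorphic to the disk D(x,n) in X via a pointed
isomorphism of induced subgraphs. -/
theorem stmt_16 (Δ : ℕ) (V : ℕ → Type) (G : ∀ k : ℕ, SimpleGraph (V k))
    (hinf : ∀ k, Infinite (V k)) (hconn : ∀ k, (G k).Connected)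
    (hdeg : ∀ k, ∀ v : V k, ((G k).neighborSet v).encard ≤ Δ)
    (x : ∀ k : ℕ, V k) :
    ∃ j : ℕ → ℕ, StrictMono j ∧
    ∃ (W : Type) (GW : SimpleGraph W) (xW : W),
      Countable W ∧ Infinite W ∧ GW.Connected ∧
      (∀ w : W, (GW.neighborSet w).encard ≤ Δ) ∧
      ∀ n : ℕ, ∃ N : ℕ, ∀ k : ℕ, N ≤ k →
        ∃ h : ((G (j k)).induce {v : V (j k) | (G (j k)).dist (x (j k)) v ≤ n}) ≃g
              (GW.induce {w : W | GW.dist xW w ≤ n}),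
          (h ⟨x (j k), by simp [SimpleGraph.dist_self]⟩ : W) = xW := by
  classical
  -- codes
  let t : ∀ n : ℕ, ℕ → Stmt16.Cd ((Δ+1)^n) := fun n k =>
    Stmt16.code (G k) (x k) ((Δ+1)^n) n
      (Stmt16.ball_finite (hconn k) (hdeg k) (x k) n)
      (Stmt16.ball_ncard_le (hconn k) (hdeg k) (x k) n)
  obtain ⟨j, hj, hstab⟩ := Stmt16.diagonal t
  refine ⟨j, hj, ?_⟩
  -- the chain of isomorphisms
  have hψ : ∀ n : ℕ, ∃ φ : ((G (j (n+2))).induce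
        (Stmt16.ball (G (j (n+2))) (x (j (n+2))) n)) ≃g
      ((G (j (n+1))).induce (Stmt16.ball (G (j (n+1))) (x (j (n+1))) n)),
      φ ⟨x (j (n+2)), Stmt16.mem_ball_self _ _ _⟩ =
        ⟨x (j (n+1)), Stmt16.mem_ball_self _ _ _⟩ := by
    intro n
    exact Stmt16.code_eq_iso (hstab n (n+2) (n+1) (by omega) (by omega))
  choose ψ hψb using hψ
  obtain ⟨W, GW, xW, hcW, hiW, hconnW, hdegW, hisos⟩ :=
    Stmt16.chain_limit (fun n => G (j (n+1))) (fun n => x (j (n+1)))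
      (fun n => hconn (j (n+1))) (fun n v => hdeg (j (n+1)) v) ψ hψb
      (fun n => hinf (j (n+1)))
  refine ⟨W, GW, xW, hcW, hiW, hconnW, hdegW, ?_⟩
  intro n
  refine ⟨n+1, fun k hk => ?_⟩
  obtain ⟨φ, hφ⟩ := Stmt16.code_eq_iso (hstab n k (n+1) (by omega) (by omega))
  obtain ⟨hn, hbase⟩ := hisos n
  refine ⟨φ.trans hn, ?_⟩
  show ((hn (φ ⟨x (j k), _⟩)) : W) = xW
  rw [hφ]
  exact hbase
end

section
/- Let Δ ∈ ℕ, let Ξ be a compact metric space, and let (X_k, x_k, φ_k), k ∈ ℕ, be a sequence of pointed, infinite, connected simple graphs in which every vertex has degree at most Δ, equipped with colorings φ_k : X_k → Ξ. Then there exist a strictly increasing function j : ℕ → ℕ, a countable type V, an infinite connected simple graph X on V in which every vertex has degree at most Δ, a vertex x ∈ V, and a coloring φ : X → Ξ, such that for every n ∈ ℕ and every ε > 0 there is N ∈ ℕ with the property that for all k ≥ N there is a graph isomorphism h from the subgraph of X_{j(k)} induced on the disk D(x_{j(k)}, n) to the subgraph of X induced on the disk D(x, n) with h(x_{j(k)})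 = x and d(φ_{j(k)}(u), φ(h(u))) < ε for every u ∈ D(x_{j(k)}, n). -/
open SimpleGraph Function

variable {V : Type} {G : SimpleGraph V}
attribute [local instance] Classical.propDecidable
noncomputable local instance : DecidableEq V := Classical.decEq V

/-- prefix/suffix distance bounds at `getVert`. -/
lemma getVert_dist_aux : ∀ {u v : V} (p : G.Walk u v) (d : ℕ),
    G.dist u (p.getVert d) ≤ d ∧ G.dist (p.getVert d) v ≤ p.length - d := by
  intro u v p
  induction p with
  | nil => intro d; simp [SimpleGraph.Walk.getVert, SimpleGraph.dist_self]
  | @cons u w v h q ih =>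
    intro d
    cases d with
    | zero =>
      refine ⟨by simp [SimpleGraph.Walk.getVert_zero, SimpleGraph.dist_self], ?_⟩
      simpa using SimpleGraph.dist_le (SimpleGraph.Walk.cons h q)
    | succ d =>
      rw [SimpleGraph.Walk.getVert_cons_succ]
      refine ⟨?_, ?_⟩
      · -- dist u (q.getVert d) ≤ d + 1
        have h1 := (ih d).1
        by_cases hr : G.Reachable w (q.getVert d)
        · obtain ⟨r, hr'⟩ := hr.exists_walk_length_eq_dist
          have h4 : G.dist u (q.getVert d) ≤ r.length + 1 := by
            simpa using SimpleGraph.dist_le (SimpleGraph.Walk.cons h r)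
          omega
        · -- q.getVert d is reachable from w via a prefix of q; contradiction-free:
          have : q.getVert d ∈ q.support := by
            rw [SimpleGraph.Walk.mem_support_iff_exists_getVert]
            by_cases hd : d ≤ q.length
            · exact ⟨d, rfl, hd⟩
            · exact ⟨q.length, by rw [SimpleGraph.Walk.getVert_of_length_le q (le_of_not_ge hd),
                SimpleGraph.Walk.getVert_length], le_rfl⟩
          exact absurd ⟨q.takeUntil _ this⟩ hr
      · have h2 := (ih d).2
        simpa [SimpleGraph.Walk.length_cons, Nat.succ_sub_succ] using h2

lemma support_dist_le {u v : V} (p : G.Walk u v) {y : V} (hy : y ∈ p.support) :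
    G.dist u y ≤ p.length :=
  le_trans (SimpleGraph.dist_le (p.takeUntil y hy)) (SimpleGraph.Walk.length_takeUntil_le p hy)

lemma dist_getVert_eq (hc : G.Connected) {u v : V} (p : G.Walk u v)
    (hp : p.length = G.dist u v) {d : ℕ} (hd : d ≤ p.length) :
    G.dist u (p.getVert d) = d := by
  have h1 := (getVert_dist_aux p d).1
  have h2 := (getVert_dist_aux p d).2
  have h3 := hc.dist_triangle (u := u) (v := p.getVert d) (w := v)
  omega

lemma exists_dist_eq' (hc : G.Connected) (x v : V) {d : ℕ} (hd : d ≤ G.dist x v) :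
    ∃ w : V, G.dist x w = d := by
  obtain ⟨p, hp⟩ := (hc x v).exists_walk_length_eq_dist
  exact ⟨p.getVert d, dist_getVert_eq hc p hp (by omega)⟩

lemma exists_adj_dist (hc : G.Connected) {x u : V} {d : ℕ} (h : G.dist x u = d + 1) :
    ∃ w : V, G.Adj w u ∧ G.dist x w = d := by
  obtain ⟨p, hp⟩ := (hc x u).exists_walk_length_eq_dist
  rw [h] at hp
  refine ⟨p.getVert d, ?_, ?_⟩
  · have := p.adj_getVert_succ (i := d) (by omega)
    rwa [show d + 1 = p.length by omega, SimpleGraph.Walk.getVert_length] at this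
  · exact dist_getVert_eq hc p (by rw [hp, h]) (by omega)

section Ball
variable (Δ : ℕ)

lemma nbr_finite (hdeg : ∀ v : V, (G.neighborSet v).encard ≤ Δ) (v : V) :
    (G.neighborSet v).Finite :=
  (Set.encard_le_coe_iff_finite_ncard_le.mp (hdeg v)).1

lemma nbr_ncard (hdeg : ∀ v : V, (G.neighborSet v).encard ≤ Δ) (v : V) :
    (G.neighborSet v).ncard ≤ Δ :=
  (Set.encard_le_coe_iff_finite_ncard_le.mp (hdeg v)).2

lemma ball_finite_card (hdeg : ∀ v : V, (G.neighborSet v).encard ≤ Δ) (hc : G.Connected) (x : V) :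
    ∀ n : ℕ, {v : V | G.dist x v ≤ n}.Finite ∧ {v : V | G.dist x v ≤ n}.ncard ≤ (Δ+1)^n := by
  intro n
  induction n with
  | zero =>
    have : {v : V | G.dist x v ≤ 0} = {x} := by
      ext v
      simp only [Set.mem_setOf_eq, Nat.le_zero, Set.mem_singleton_iff]
      rw [hc.dist_eq_zero_iff]
      exact eq_comm
    rw [this]; simp
  | succ n ih =>
    have hsub : {v : V | G.dist x v ≤ n + 1} ⊆
        ⋃ v ∈ {v : V | G.dist x v ≤ n}, insert v (G.neighborSet v) := by
      intro u hu
      simp only [Set.mem_setOf_eq] at hu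
      by_cases h : G.dist x u ≤ n
      · exact Set.mem_biUnion h (Set.mem_insert _ _)
      · have hd : G.dist x u = n + 1 := by omega
        obtain ⟨w, hw, hwd⟩ := exists_adj_dist hc hd
        exact Set.mem_biUnion (by simp [hwd]) (Set.mem_insert_of_mem _ hw)
    have hfin : (⋃ v ∈ {v : V | G.dist x v ≤ n}, insert v (G.neighborSet v)).Finite :=
      Set.Finite.biUnion ih.1 (fun v _ => (nbr_finite Δ hdeg v).insert v)
    constructor
    · exact hfin.subset hsub
    · -- cardinality
      classical
      set s : Finset V := ih.1.toFinset with hs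
      have hcov : {v : V | G.dist x v ≤ n + 1} ⊆
          ↑(s.biUnion (fun v => insert v (nbr_finite Δ hdeg v).toFinset)) := by
        intro u hu
        obtain ⟨v, hv, huv⟩ := Set.mem_iUnion₂.mp (hsub hu)
        simp only [Finset.coe_biUnion, Set.mem_iUnion, Finset.mem_coe, Finset.mem_biUnion]
        refine ⟨v, by simp [hs, Set.Finite.mem_toFinset]; exact hv, ?_⟩
        simp only [Finset.mem_insert, Set.Finite.mem_toFinset]
        simpa using huv
      calc {v : V | G.dist x v ≤ n + 1}.ncard
          ≤ (↑(s.biUnion (fun v => insert v (nbr_finite Δ hdeg v).toFinset)) : Set V).ncard :=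
            Set.ncard_le_ncard hcov (Finset.finite_toSet _)
        _ = (s.biUnion (fun v => insert v (nbr_finite Δ hdeg v).toFinset)).card :=
            Set.ncard_coe_finset _
        _ ≤ ∑ v ∈ s, (insert v (nbr_finite Δ hdeg v).toFinset).card := Finset.card_biUnion_le
        _ ≤ ∑ _v ∈ s, (Δ + 1) := by
            refine Finset.sum_le_sum fun v _ => ?_
            have := Finset.card_insert_le v (nbr_finite Δ hdeg v).toFinset
            have h2 : (nbr_finite Δ hdeg v).toFinset.card ≤ Δ := by
              rw [← Set.ncard_eq_toFinset_card _ (nbr_finite Δ hdeg v)]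
              exact nbr_ncard Δ hdeg v
            omega
        _ = s.card * (Δ + 1) := by rw [Finset.sum_const, smul_eq_mul]
        _ ≤ (Δ+1)^n * (Δ+1) := by
            have : s.card ≤ (Δ+1)^n := by
              rw [hs, ← Set.ncard_eq_toFinset_card _ ih.1]; exact ih.2
            exact Nat.mul_le_mul_right _ this
        _ = (Δ+1)^(n+1) := by ring

end Ball

section Enum

lemma countable_of_connected (Δ : ℕ) (hdeg : ∀ v : V, (G.neighborSet v).encard ≤ Δ)
    (hc : G.Connected) (x : V) : Countable V := by
  have huniv : (Set.univ : Set V) = ⋃ n : ℕ, {v : V | G.dist x v ≤ n} := by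
    ext v; simp only [Set.mem_univ, Set.mem_iUnion, Set.mem_setOf_eq, true_iff]
    exact ⟨G.dist x v, le_rfl⟩
  have : (Set.univ : Set V).Countable := by
    rw [huniv]
    exact Set.countable_iUnion fun n => ((ball_finite_card Δ hdeg hc x n).1).countable
  exact Set.countable_univ_iff.mp this

lemma exists_enum (Δ : ℕ) (hdeg : ∀ v : V, (G.neighborSet v).encard ≤ Δ)
    (hc : G.Connected) [Infinite V] (x : V) :
    ∃ e : ℕ ≃ V, e 0 = x ∧ (∀ i, G.dist x (e i) ≤ i) ∧
      (∀ i n, G.dist x (e i) ≤ n → i < (Δ+1)^n) := by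
  have := countable_of_connected Δ hdeg hc x
  obtain ⟨ι, hι⟩ := Countable.exists_injective_nat V
  set key : V → ℕ ×ₗ ℕ := fun v => toLex (G.dist x v, ι v) with hkey
  have hkeyinj : Function.Injective key := by
    intro u v huv
    have : (G.dist x u, ι u) = (G.dist x v, ι v) := toLex.injective huv
    exact hι (congrArg Prod.snd this)
  have hkeydist : ∀ {w v : V}, key w < key v → G.dist x w ≤ G.dist x v := by
    intro w v h
    rw [hkey, Prod.Lex.lt_iff] at h
    rcases h with h | ⟨h1, _⟩
    · exact le_of_lt h
    · exact le_of_eq h1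
  set preds : V → Set V := fun v => {w | key w < key v} with hpreds
  have hpredsball : ∀ v, preds v ⊆ {w : V | G.dist x w ≤ G.dist x v} :=
    fun v w hw => hkeydist hw
  have hpredsfin : ∀ v, (preds v).Finite := fun v =>
    ((ball_finite_card Δ hdeg hc x (G.dist x v)).1).subset (hpredsball v)
  set Nv : V → ℕ := fun v => (preds v).ncard with hNv
  have hmono : ∀ {w v : V}, key w < key v → Nv w < Nv v := by
    intro w v h
    apply Set.ncard_lt_ncard _ (hpredsfin v)
    constructor
    · intro u hu; exact lt_trans hu h
    · intro hsub
      exact absurd (hsub h) (lt_irrefl (key w))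
  have hNinj : Function.Injective Nv := by
    intro u v huv
    by_contra hne
    rcases lt_or_gt_of_ne (fun h : key u = key v => hne (hkeyinj h)) with h | h
    · exact absurd huv (Nat.ne_of_lt (hmono h))
    · exact absurd huv.symm (Nat.ne_of_lt (hmono h))
  have hNx : Nv x = 0 := by
    have : preds x = ∅ := by
      ext w
      simp only [hpreds, Set.mem_setOf_eq, Set.mem_empty_iff_false, iff_false, not_lt]
      by_cases hw : w = x
      · subst hw; exact le_rfl
      · -- dist x w ≥ 1 > 0 = dist x x
        apply le_of_lt
        rw [hkey, Prod.Lex.lt_iff]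
        left
        simp only [SimpleGraph.dist_self]
        exact Nat.pos_of_ne_zero fun h0 =>
          hw ((hc.dist_eq_zero_iff.mp h0)).symm
    rw [hNv]; simp [this]
  have hdown : ∀ (v : V) (m : ℕ), Nv v = m + 1 → ∃ w, Nv w = m := by
    intro v m hv
    have hcard : (preds v).ncard = m + 1 := hv
    have hne : (preds v).Nonempty :=
      Set.nonempty_of_ncard_ne_zero (by omega)
    obtain ⟨w, hw, hwmax⟩ := Set.exists_max_image (preds v) key (hpredsfin v) hne
    refine ⟨w, ?_⟩
    have hpw : preds w = preds v \ {w} := by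
      ext u
      simp only [hpreds, Set.mem_setOf_eq, Set.mem_diff, Set.mem_singleton_iff]
      constructor
      · intro hu
        exact ⟨lt_trans hu hw, fun h => by subst h; exact lt_irrefl _ hu⟩
      · rintro ⟨hu, hne'⟩
        rcases lt_or_eq_of_le (hwmax u hu) with h | h
        · exact h
        · exact absurd (hkeyinj h) hne'
    have : Nv w = (preds v).ncard - 1 := by
      show (preds w).ncard = (preds v).ncard - 1
      rw [hpw, Set.ncard_diff_singleton_of_mem hw]
    omega
  have hub : ∀ n : ℕ, ∃ v, n ≤ Nv v := by
    intro n
    obtain ⟨b, ⟨v, rfl⟩, hb⟩ := (Set.infinite_range_of_injective hNinj).exists_gt n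
    exact ⟨v, le_of_lt hb⟩
  have hsur : Function.Surjective Nv := by
    intro n
    obtain ⟨v, hv⟩ := hub n
    have hstep : ∀ (d : ℕ) (v : V), Nv v = n + d → ∃ w, Nv w = n := by
      intro d
      induction d with
      | zero => intro v hv; exact ⟨v, hv⟩
      | succ d ih =>
        intro v hv
        obtain ⟨w, hw⟩ := hdown v (n + d) (by omega)
        exact ih w hw
    exact hstep (Nv v - n) v (by omega)
  set F : V ≃ ℕ := Equiv.ofBijective Nv ⟨hNinj, hsur⟩ with hF
  have hFv : ∀ v, F v = Nv v := fun v => rfl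
  refine ⟨F.symm, ?_, ?_, ?_⟩
  · rw [Equiv.symm_apply_eq, hFv, hNx]
  · -- dist x (e i) ≤ i
    have hkey2 : ∀ v : V, G.dist x v ≤ Nv v := by
      intro v
      set D := G.dist x v with hD
      choose f hf using fun d : ℕ => fun (hd : d ≤ D) => exists_dist_eq' hc x v hd
      have himg : (fun d => if hd : d ≤ D then f d hd else v) '' (Set.Iio D) ⊆ preds v := by
        rintro - ⟨d, hd, rfl⟩
        simp only [Set.mem_Iio] at hd
        show (if hd : d ≤ D then f d hd else v) ∈ preds v
        rw [dif_pos (le_of_lt hd)]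
        simp only [hpreds, Set.mem_setOf_eq, hkey]
        rw [Prod.Lex.lt_iff]
        left
        rw [hf d (le_of_lt hd)]
        exact hd
      have hinj : Set.InjOn (fun d => if hd : d ≤ D then f d hd else v) (Set.Iio D) := by
        intro a ha b hb hab
        simp only [Set.mem_Iio] at ha hb
        replace hab : (if hd : a ≤ D then f a hd else v) = (if hd : b ≤ D then f b hd else v) := hab
        rw [dif_pos (le_of_lt ha), dif_pos (le_of_lt hb)] at hab
        have := hf a (le_of_lt ha)
        rw [hab, hf b (le_of_lt hb)] at this
        exact this.symm
      calc G.dist x v = (Set.Iio D).ncard := by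
            rw [← Finset.coe_Iio, Set.ncard_coe_finset, Nat.card_Iio]
        _ = ((fun d => if hd : d ≤ D then f d hd else v) '' (Set.Iio D)).ncard :=
            (Set.ncard_image_of_injOn hinj).symm
        _ ≤ (preds v).ncard := Set.ncard_le_ncard himg (hpredsfin v)
    intro i
    have := hkey2 (F.symm i)
    rwa [show Nv (F.symm i) = i from F.apply_symm_apply i] at this
  · intro i n hdist
    have hi : i = Nv (F.symm i) := (F.apply_symm_apply i).symm
    have hsub : preds (F.symm i) ⊂ {w : V | G.dist x w ≤ n} := by
      constructor
      · intro w hw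
        exact le_trans (hkeydist hw) hdist
      · intro hsub
        exact absurd (hsub hdist) (lt_irrefl (key (F.symm i)))
    calc i = (preds (F.symm i)).ncard := hi
      _ < {w : V | G.dist x w ≤ n}.ncard :=
          Set.ncard_lt_ncard hsub (ball_finite_card Δ hdeg hc x n).1
      _ ≤ (Δ+1)^n := (ball_finite_card Δ hdeg hc x n).2

end Enum

section IsoDist

lemma iso_dist_eq {α β : Type} {B : SimpleGraph α} {C : SimpleGraph β} (f : B ≃g C)
    (u v : α) : B.dist u v = C.dist (f u) (f v) := by
  have h1 : ∀ {α β : Type} {B : SimpleGraph α} {C : SimpleGraph β} (f : B ≃g C) (u v : α),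
      C.dist (f u) (f v) ≤ B.dist u v := by
    intro α β B C f u v
    by_cases hr : B.Reachable u v
    · obtain ⟨p, hp⟩ := hr.exists_walk_length_eq_dist
      have := SimpleGraph.dist_le (p.map f.toHom)
      rwa [SimpleGraph.Walk.length_map, hp] at this
    · rw [SimpleGraph.dist_eq_zero_of_not_reachable hr]
      rw [SimpleGraph.dist_eq_zero_of_not_reachable]
      intro ⟨q⟩
      exact hr ⟨(q.map f.symm.toHom).copy (f.symm_apply_apply u) (f.symm_apply_apply v)⟩
  refine le_antisymm ?_ (h1 f u v)
  have := h1 f.symm (f u) (f v)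
  rwa [f.symm_apply_apply, f.symm_apply_apply] at this

end IsoDist

section Transfer

lemma walk_transfer {B B' : SimpleGraph ℕ} {M : ℕ}
    (hag : ∀ i i', i < M → i' < M → (B.Adj i i' ↔ B'.Adj i i')) :
    ∀ {i j : ℕ} (p : B.Walk i j), (∀ u ∈ p.support, u < M) →
      ∃ q : B'.Walk i j, q.length = p.length := by
  intro i j p
  induction p with
  | nil => intro _; exact ⟨SimpleGraph.Walk.nil, rfl⟩
  | @cons i w j h q ih =>
    intro hs
    have hi : i < M := hs i (SimpleGraph.Walk.start_mem_support _)
    have hw : w < M := by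
      apply hs
      simp [SimpleGraph.Walk.support_cons]
    obtain ⟨q', hq'⟩ := ih fun u hu => hs u (by simp [SimpleGraph.Walk.support_cons]; right; exact hu)
    exact ⟨SimpleGraph.Walk.cons ((hag i w hi hw).mp h) q', by simp [hq']⟩

lemma ball_mem_transfer {B B' : SimpleGraph ℕ} (hcB : B.Connected) {S : ℕ → ℕ}
    (hgB : ∀ n i, B.dist 0 i ≤ n → i < S n) {n : ℕ}
    (hag : ∀ i i', i < S n → i' < S n → (B.Adj i i' ↔ B'.Adj i i')) :
    ∀ i, B.dist 0 i ≤ n → B'.dist 0 i ≤ n := by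
  intro i hi
  obtain ⟨p, hp⟩ := (hcB 0 i).exists_walk_length_eq_dist
  have hplen : p.length ≤ n := by omega
  have hsup : ∀ u ∈ p.support, u < S n := by
    intro u hu
    exact hgB n u ((support_dist_le p hu).trans hplen)
  obtain ⟨q, hq⟩ := walk_transfer hag p hsup
  exact (SimpleGraph.dist_le q).trans (by omega)

end Transfer

open Filter Topology

/-- Let Δ ∈ ℕ, let Ξ be a compact metric space, and let (X_k, x_k, φ_k)
be a sequence of pointed, infinite, connected simple graphs of maximum degree at most
Δ equipped with colorings φ_k : X_k → Ξ. Then there exist a subsequence j and a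
pointed, infinite, connected, colored simple graph (X,x,φ) on a countable vertex type
of maximum degree at most Δ, such that for every n ∈ ℕ and every ε > 0, for all large
enough k, there is a pointed isomorphism h from the disk D(x_{j(k)}, n) in X_{j(k)}
onto the disk D(x,n) in X moving all colors by less than ε. -/
theorem stmt_17 (Δ : ℕ) {Ξ : Type} [MetricSpace Ξ] [CompactSpace Ξ]
    (V : ℕ → Type) (G : ∀ k : ℕ, SimpleGraph (V k))
    (hinf : ∀ k, Infinite (V k)) (hconn : ∀ k, (G k).Connected)
    (hdeg : ∀ k, ∀ v : V k, ((G k).neighborSet v).encard ≤ Δ)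
    (x : ∀ k : ℕ, V k) (φ : ∀ k : ℕ, V k → Ξ) :
    ∃ j : ℕ → ℕ, StrictMono j ∧
    ∃ (W : Type) (GW : SimpleGraph W) (xW : W) (φW : W → Ξ),
      Countable W ∧ Infinite W ∧ GW.Connected ∧
      (∀ w : W, (GW.neighborSet w).encard ≤ Δ) ∧
      ∀ (n : ℕ) (ε : ℝ), 0 < ε → ∃ N : ℕ, ∀ k : ℕ, N ≤ k →
        ∃ h : ((G (j k)).induce {v : V (j k) | (G (j k)).dist (x (j k)) v ≤ n}) ≃g
              (GW.induce {w : W | GW.dist xW w ≤ n}),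
          (h ⟨x (j k), by simp [SimpleGraph.dist_self]⟩ : W) = xW ∧
          ∀ u : {v : V (j k) | (G (j k)).dist (x (j k)) v ≤ n},
            dist (φ (j k) u) (φW (h u)) < ε := by
  classical
  -- enumerations
  have henum : ∀ k, ∃ e : ℕ ≃ V k, e 0 = x k ∧ (∀ i, (G k).dist (x k) (e i) ≤ i) ∧
      (∀ i n, (G k).dist (x k) (e i) ≤ n → i < (Δ+1)^n) := fun k => by
    have := hinf k
    exact exists_enum Δ (hdeg k) (hconn k) (x k)
  choose e he0 heE2 heE3 using henum
  -- pulled-back graphs on ℕ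
  set B : ∀ k : ℕ, SimpleGraph ℕ := fun k => (G k).comap (e k).toEmbedding with hBdef
  have hBadj : ∀ k i i', (B k).Adj i i' ↔ (G k).Adj (e k i) (e k i') := by
    intro k i i'; simp [hBdef, SimpleGraph.comap_adj]
  have hdistB : ∀ k i, (B k).dist 0 i = (G k).dist (x k) (e k i) := by
    intro k i
    have := iso_dist_eq (SimpleGraph.Iso.comap (e k) (G k)) 0 i
    rwa [SimpleGraph.Iso.comap_apply, SimpleGraph.Iso.comap_apply, he0 k] at this
  have hBconn : ∀ k, (B k).Connected := fun k =>
    (SimpleGraph.Iso.comap (e k) (G k)).connected_iff.mpr (hconn k)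
  have hgoodB : ∀ k n i, (B k).dist 0 i ≤ n → i < (Δ+1)^n := by
    intro k n i h
    exact heE3 k i n (by rwa [hdistB] at h)
  have hE2B : ∀ k i, (B k).dist 0 i ≤ i := by
    intro k i; rw [hdistB]; exact heE2 k i
  have hdegB : ∀ k i, ((B k).neighborSet i).encard ≤ Δ := by
    intro k i
    have himg : (e k) '' ((B k).neighborSet i) ⊆ (G k).neighborSet (e k i) := by
      rintro - ⟨u, hu, rfl⟩
      exact (hBadj k i u).mp hu
    calc ((B k).neighborSet i).encard = ((e k) '' ((B k).neighborSet i)).encard :=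
          ((e k).injective.encard_image _).symm
      _ ≤ ((G k).neighborSet (e k i)).encard := Set.encard_mono himg
      _ ≤ Δ := hdeg k (e k i)
  -- compactness
  set y : ℕ → (ℕ → ℕ → Bool) × (ℕ → Ξ) :=
    fun k => (fun i i' => decide ((B k).Adj i i'), fun i => φ k (e k i)) with hydef
  obtain ⟨a, j, hjmono, hconv⟩ := CompactSpace.tendsto_subseq y
  have hA : ∀ i i', ∀ᶠ k in atTop, decide ((B (j k)).Adj i i') = a.1 i i' := by
    intro i i'
    have h1 : Tendsto (fun k => (y (j k)).1) atTop (𝓝 a.1) :=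
      (continuous_fst.tendsto a).comp hconv
    have h2 : Tendsto (fun k => (y (j k)).1 i i') atTop (𝓝 (a.1 i i')) :=
      ((continuous_apply i').tendsto _).comp (((continuous_apply i).tendsto _).comp h1)
    rw [nhds_discrete] at h2
    exact Filter.tendsto_pure.mp h2
  have hC : ∀ i, Tendsto (fun k => φ (j k) (e (j k) i)) atTop (𝓝 (a.2 i)) := by
    intro i
    have h1 : Tendsto (fun k => (y (j k)).2) atTop (𝓝 a.2) :=
      (continuous_snd.tendsto a).comp hconv
    exact ((continuous_apply i).tendsto _).comp h1
  -- symmetry and irreflexivity of the limit adjacency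
  have hsymm : ∀ p q : ℕ, a.1 p q = a.1 q p := by
    intro p q
    obtain ⟨k, h1, h2⟩ := ((hA p q).and (hA q p)).exists
    rw [← h1, ← h2]
    exact decide_eq_decide.mpr ⟨fun h => (B (j k)).adj_symm h, fun h => (B (j k)).adj_symm h⟩
  have hirr : ∀ p : ℕ, a.1 p p = false := by
    intro p
    obtain ⟨k, h1⟩ := (hA p p).exists
    rw [← h1]
    exact decide_eq_false ((B (j k)).loopless.irrefl p)
  set GW : SimpleGraph ℕ :=
    { Adj := fun p q => a.1 p q = true
      symm := ⟨fun p q h => by show a.1 q p = true; rw [hsymm q p]; exact h⟩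
      loopless := ⟨fun p h => by have h' : a.1 p p = true := h; rw [hirr p] at h'; exact Bool.false_ne_true h'⟩ } with hGWdef
  -- agreement on finite blocks, eventually
  have hagree : ∀ M : ℕ, ∀ᶠ k in atTop,
      ∀ i i', i < M → i' < M → ((B (j k)).Adj i i' ↔ GW.Adj i i') := by
    intro M
    have : ∀ᶠ k in atTop, ∀ i ∈ Finset.range M, ∀ i' ∈ Finset.range M,
        decide ((B (j k)).Adj i i') = a.1 i i' := by
      rw [Filter.eventually_all_finset]
      intro i _
      rw [Filter.eventually_all_finset]
      intro i' _
      exact hA i i'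
    filter_upwards [this] with k hk i i' hi hi'
    have := hk i (Finset.mem_range.mpr hi) i' (Finset.mem_range.mpr hi')
    constructor
    · intro h
      show a.1 i i' = true
      rw [← this]
      exact decide_eq_true h
    · intro h
      have h2 : decide ((B (j k)).Adj i i') = true := by rw [this]; exact h
      exact of_decide_eq_true h2
  -- color control on finite blocks, eventually
  have hcol : ∀ (M : ℕ) (ε : ℝ), 0 < ε → ∀ᶠ k in atTop,
      ∀ i < M, dist (φ (j k) (e (j k) i)) (a.2 i) < ε := by
    intro M ε hε
    have : ∀ᶠ k in atTop, ∀ i ∈ Finset.range M,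
        dist (φ (j k) (e (j k) i)) (a.2 i) < ε := by
      rw [Filter.eventually_all_finset]
      intro i _
      have := (hC i) (Metric.ball_mem_nhds (a.2 i) hε)
      simpa [Metric.mem_ball] using this
    filter_upwards [this] with k hk i hi
    exact hk i (Finset.mem_range.mpr hi)
  -- GW is connected
  have hGWreach : ∀ i : ℕ, GW.Reachable 0 i := by
    intro i
    obtain ⟨k, hk⟩ := (hagree ((Δ+1)^i)).exists
    obtain ⟨p, hp⟩ := (hBconn (j k) 0 i).exists_walk_length_eq_dist
    have hplen : p.length ≤ i := by have := hE2B (j k) i; omega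
    have hsup : ∀ u ∈ p.support, u < (Δ+1)^i :=
      fun u hu => hgoodB (j k) i u ((support_dist_le p hu).trans hplen)
    obtain ⟨q, _⟩ := walk_transfer hk p hsup
    exact ⟨q⟩
  have hGWconn : GW.Connected := by
    constructor
    · intro u v
      exact (hGWreach u).symm.trans (hGWreach v)
  -- GW is "good": balls are contained in initial segments
  have hgoodW : ∀ n i, GW.dist 0 i ≤ n → i < (Δ+1)^n := by
    intro n i hni
    obtain ⟨p, hp⟩ := (hGWreach i).exists_walk_length_eq_dist
    set M : ℕ := p.support.toFinset.sup id + 1 with hM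
    have hsup : ∀ u ∈ p.support, u < M := by
      intro u hu
      have : u ≤ p.support.toFinset.sup id := Finset.le_sup (f := id) (List.mem_toFinset.mpr hu)
      omega
    obtain ⟨k, hk⟩ := (hagree M).exists
    obtain ⟨q, hq⟩ := walk_transfer (fun i i' hi hi' => (hk i i' hi hi').symm) p hsup
    have : (B (j k)).dist 0 i ≤ n := (SimpleGraph.dist_le q).trans (by omega)
    exact hgoodB (j k) n i this
  -- degree bound for GW
  have hdegW : ∀ i : ℕ, (GW.neighborSet i).encard ≤ Δ := by
    intro i
    by_contra hcon
    push_neg at hcon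
    have h1 : ((Δ : ℕ∞) + 1) ≤ (GW.neighborSet i).encard := Order.add_one_le_of_lt hcon
    obtain ⟨t, hts, htc⟩ := Set.exists_subset_encard_eq h1
    have htfin : t.Finite := Set.finite_of_encard_eq_coe (by exact_mod_cast htc)
    set M : ℕ := htfin.toFinset.sup id + i + 1 with hM
    obtain ⟨k, hk⟩ := (hagree M).exists
    have htsub : t ⊆ (B (j k)).neighborSet i := by
      intro u hu
      have huM : u < M := by
        have : u ≤ htfin.toFinset.sup id := Finset.le_sup (f := id) (htfin.mem_toFinset.mpr hu)
        omega
      exact (hk i u (by omega) huM).mpr (hts hu)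
    have := (Set.encard_mono htsub).trans (hdegB (j k) i)
    rw [htc] at this
    have : (Δ : ℕ∞) + 1 ≤ Δ := this
    simp [ENat.add_one_le_iff] at this
  -- assemble
  refine ⟨j, hjmono, ℕ, GW, 0, a.2, inferInstance, inferInstance, hGWconn, hdegW, ?_⟩
  intro n ε hε
  obtain ⟨N, hN⟩ := Filter.eventually_atTop.mp ((hagree ((Δ+1)^n)).and (hcol ((Δ+1)^n) ε hε))
  refine ⟨N, fun k hk => ?_⟩
  obtain ⟨hagk, hcolk⟩ := hN k hk
  set k' : ℕ := j k with hk'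
  -- distances commute with the enumeration
  have hdist' : ∀ v : V k', (G k').dist (x k') v = (B k').dist 0 ((e k').symm v) := by
    intro v
    rw [hdistB k' ((e k').symm v), Equiv.apply_symm_apply]
  -- balls agree
  have hball : ∀ i : ℕ, ((B k').dist 0 i ≤ n ↔ GW.dist 0 i ≤ n) := by
    intro i
    constructor
    · exact ball_mem_transfer (hBconn k') (hgoodB k') hagk i
    · exact ball_mem_transfer hGWconn hgoodW (fun i i' hi hi' => (hagk i i' hi hi').symm) i
  -- the underlying equivalence of vertex sets
  have hmem : ∀ v : V k', v ∈ {v : V k' | (G k').dist (x k') v ≤ n} ↔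
      (e k').symm v ∈ {w : ℕ | GW.dist 0 w ≤ n} := by
    intro v
    simp only [Set.mem_setOf_eq]
    rw [hdist' v]
    exact hball _
  set eq : {v : V k' | (G k').dist (x k') v ≤ n} ≃ {w : ℕ | GW.dist 0 w ≤ n} :=
    ((e k').symm.subtypeEquiv hmem) with heq
  refine ⟨⟨eq, ?_⟩, ?_, ?_⟩
  · -- adjacency is preserved
    intro u v
    show GW.Adj ((e k').symm u) ((e k').symm v) ↔ (G k').Adj u v
    have hu : ((e k').symm (u : V k') : ℕ) < (Δ+1)^n := by
      apply hgoodB k' n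
      rw [← hdist']
      exact u.2
    have hv : ((e k').symm (v : V k') : ℕ) < (Δ+1)^n := by
      apply hgoodB k' n
      rw [← hdist']
      exact v.2
    rw [← hagk _ _ hu hv, hBadj, Equiv.apply_symm_apply, Equiv.apply_symm_apply]
  · -- root is preserved
    show ((e k').symm (x k') : ℕ) = 0
    rw [Equiv.symm_apply_eq, he0]
  · -- colors move by less than ε
    intro u
    have hu : ((e k').symm (u : V k') : ℕ) < (Δ+1)^n := by
      apply hgoodB k' n
      rw [← hdist']
      exact u.2
    have := hcolk _ hu
    rwa [Equiv.apply_symm_apply] at this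
end
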